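/- arXiv:2112.14596 — 5 statements merged into one kernel-verified Lean document; each statement's English description precedes it below -/
import Mathlib

section
/- There do not exist integers a, b, c, p, q, r satisfying simultaneously: a² + (a+1)² + 2b² + 2c² = 7, 2p² + q² + (q+1)² + 2r² = 11, and (2a+1)p + b(2q+1) + 2cr = 0. -/
set_option maxHeartbeats 1600000

theorem stmt_3 :
    ¬ ∃ a b c p q r : ℤ,
      a ^ 2 + (a + 1) ^ 2 + 2 * b ^ 2 + 2 * c ^ 2 = 7 ∧
      2 * p ^ 2 + q ^ 2 + (q + 1) ^ 2 + 2 * r ^ 2 = 11 ∧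
      (2 * a + 1) * p + b * (2 * q + 1) + 2 * c * r = 0 := by
  rintro ⟨a, b, c, p, q, r, h1, h2, h3⟩
  have ha : -2 ≤ a ∧ a ≤ 1 := by constructor <;> nlinarith [sq_nonneg b, sq_nonneg c, sq_nonneg (a+1), sq_nonneg a]
  have hb : -1 ≤ b ∧ b ≤ 1 := by constructor <;> nlinarith [sq_nonneg a, sq_nonneg (a+1), sq_nonneg c]
  have hc : -1 ≤ c ∧ c ≤ 1 := by constructor <;> nlinarith [sq_nonneg a, sq_nonneg (a+1), sq_nonneg b]
  have hp : -2 ≤ p ∧ p ≤ 2 := by constructor <;> nlinarith [sq_nonneg q, sq_nonneg (q+1), sq_nonneg r]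
  have hq : -2 ≤ q ∧ q ≤ 1 := by
    constructor
    · nlinarith [sq_nonneg p, sq_nonneg r, sq_nonneg (q + 2)]
    · nlinarith [sq_nonneg p, sq_nonneg r, sq_nonneg (q - 1)]
  have hr : -2 ≤ r ∧ r ≤ 2 := by
    constructor
    · nlinarith [sq_nonneg p, sq_nonneg q, sq_nonneg (q + 1), sq_nonneg (r + 2)]
    · nlinarith [sq_nonneg p, sq_nonneg q, sq_nonneg (q + 1), sq_nonneg (r - 2)]
  obtain ⟨ha1, ha2⟩ := ha; obtain ⟨hb1, hb2⟩ := hb; obtain ⟨hc1, hc2⟩ := hc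
  obtain ⟨hp1, hp2⟩ := hp; obtain ⟨hq1, hq2⟩ := hq; obtain ⟨hr1, hr2⟩ := hr
  interval_cases a <;> interval_cases q <;>
    first
      | omega
      | (interval_cases b <;> interval_cases c <;>
          first
            | omega
            | (interval_cases p <;> interval_cases r <;> omega))
end

section
/- Let p, r be integers with p ≥ 3 and r > p + 6. Then there are no integers a₁, a₂, b₁, b₂ with a₁ + a₂ = 1 and a₁²·p + a₂²·r + 2b₁² + 2b₂² = p + 6. -/
theorem stmt_7 (p r : ℤ) (hp : 3 ≤ p) (hr : p + 6 < r) :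
    ¬ ∃ a₁ a₂ b₁ b₂ : ℤ, a₁ + a₂ = 1 ∧
      a₁ ^ 2 * p + a₂ ^ 2 * r + 2 * b₁ ^ 2 + 2 * b₂ ^ 2 = p + 6 := by
  rintro ⟨a₁, a₂, b₁, b₂, hsum, heq⟩
  by_cases h : a₂ = 0
  · subst h
    have ha : a₁ = 1 := by omega
    subst ha
    have h3 : b₁ ^ 2 + b₂ ^ 2 = 3 := by nlinarith
    have hb1 : -1 ≤ b₁ ∧ b₁ ≤ 1 := by constructor <;> nlinarith [sq_nonneg b₂]
    have hb2 : -1 ≤ b₂ ∧ b₂ ≤ 1 := by constructor <;> nlinarith [sq_nonneg b₁]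
    obtain ⟨h1, h2⟩ := hb1
    obtain ⟨h3', h4⟩ := hb2
    interval_cases b₁ <;> interval_cases b₂ <;> omega
  · have h1 : 1 ≤ a₂ ^ 2 := by
      rcases lt_or_gt_of_ne h with h' | h' <;> nlinarith
    nlinarith [sq_nonneg a₁, sq_nonneg b₁, sq_nonneg b₂]
end

section
/- Let p ≥ 3 and k ≥ 1 and m ≥ 0 be integers. Suppose for each j ∈ {1,…,k} we have vectors a^j ∈ ℤ^{k+1} and b^j ∈ ℤ^m satisfying: (i) Σᵢ aᵢ^j = 1; (ii) p·Σᵢ (aᵢ^j)² + 2·Σ_ℓ (b_ℓ^j)² = p + 2; and (iii) for all j ≠ j', p·Σᵢ aᵢ^j aᵢ^{j'} + 2·Σ_ℓ b_ℓ^j b_ℓ^{j'} = 0. Then k ≤ m. -/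
lemma unit_vec_aux {n : ℕ} (c : Fin n → ℤ) (h : ∑ i, c i ^ 2 = 1) :
    ∃ l, c l ^ 2 = 1 ∧ ∀ l', l' ≠ l → c l' = 0 := by
  have hex : ∃ l, c l ≠ 0 := by
    by_contra h0
    push_neg at h0
    simp [h0] at h
  obtain ⟨l, hl⟩ := hex
  have hsplit : c l ^ 2 + ∑ i ∈ Finset.univ.erase l, c i ^ 2 = 1 := by
    rw [← h]
    exact Finset.add_sum_erase Finset.univ (fun i => c i ^ 2) (Finset.mem_univ l)
  have h1 : 1 ≤ c l ^ 2 := by nlinarith [sq_abs (c l), Int.one_le_abs hl]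
  have hrest0 : 0 ≤ ∑ i ∈ Finset.univ.erase l, c i ^ 2 :=
    Finset.sum_nonneg fun i _ => sq_nonneg _
  have hcl : c l ^ 2 = 1 := by linarith
  have hrest : ∑ i ∈ Finset.univ.erase l, c i ^ 2 = 0 := by linarith
  refine ⟨l, hcl, fun l' hl' => ?_⟩
  have := (Finset.sum_eq_zero_iff_of_nonneg fun i _ => sq_nonneg (c i)).mp hrest l'
    (Finset.mem_erase.mpr ⟨hl', Finset.mem_univ _⟩)
  exact pow_eq_zero_iff (by norm_num) |>.mp this

theorem stmt_14 (p : ℤ) (hp : 3 ≤ p) (k m : ℕ) (hk : 1 ≤ k)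
    (a : Fin k → Fin (k + 1) → ℤ) (b : Fin k → Fin m → ℤ)
    (h1 : ∀ j, ∑ i, a j i = 1)
    (h2 : ∀ j, p * ∑ i, (a j i) ^ 2 + 2 * ∑ l, (b j l) ^ 2 = p + 2)
    (h3 : ∀ j j', j ≠ j' → p * ∑ i, a j i * a j' i + 2 * ∑ l, b j l * b j' l = 0) :
    k ≤ m := by
  have hS : ∀ j, ∑ i, a j i ^ 2 = 1 := by
    intro j
    have hS1 : (1 : ℤ) ≤ ∑ i, a j i ^ 2 := by
      calc (1 : ℤ) = ∑ i, a j i := (h1 j).symm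
        _ ≤ ∑ i, a j i ^ 2 :=
          Finset.sum_le_sum fun i _ => by nlinarith [sq_nonneg (a j i - 1), sq_nonneg (a j i)]
    have hT0 : 0 ≤ ∑ l, b j l ^ 2 := Finset.sum_nonneg fun l _ => sq_nonneg _
    have h2j := h2 j
    have hSle : ∑ i, a j i ^ 2 ≤ 1 := by
      by_contra hc
      push_neg at hc
      have h2S : (2 : ℤ) ≤ ∑ i, a j i ^ 2 := hc
      nlinarith
    linarith
  have hT : ∀ j, ∑ l, b j l ^ 2 = 1 := by
    intro j
    have h2j := h2 j
    rw [hS j] at h2j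
    linarith
  choose σ hσ1 hσ2 using fun j => unit_vec_aux (a j) (hS j)
  choose τ hτ1 hτ2 using fun j => unit_vec_aux (b j) (hT j)
  have hinj : Function.Injective τ := by
    intro j j' hjj'
    by_contra hne
    have h3' := h3 j j' hne
    set A := ∑ i, a j i * a j' i with hAdef
    set B := ∑ l, b j l * b j' l with hBdef
    have hA : A = a j (σ j) * a j' (σ j) :=
      Fintype.sum_eq_single _ fun i hi => by rw [hσ2 j i hi, zero_mul]
    have hB : B = b j (τ j) * b j' (τ j) :=
      Fintype.sum_eq_single _ fun l hl => by rw [hτ2 j l hl, zero_mul]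
    have e2 : (b j' (τ j)) ^ 2 = 1 := hjj' ▸ hτ1 j'
    have hBsq : B ^ 2 = 1 := by rw [hB, mul_pow, hτ1 j, e2]; norm_num
    have hAsq : A ^ 2 ≤ 1 := by
      have e1 := hσ1 j
      have e3 : (a j' (σ j)) ^ 2 ≤ 1 := by
        rw [← hS j']
        exact Finset.single_le_sum (f := fun i => a j' i ^ 2) (fun i _ => sq_nonneg _) (Finset.mem_univ _)
      rw [hA, mul_pow, e1, one_mul]
      exact e3
    have h01 : A ^ 2 = 0 ∨ A ^ 2 = 1 := by
      rcases eq_or_lt_of_le (sq_nonneg A) with h0 | h0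
      · exact Or.inl h0.symm
      · exact Or.inr (le_antisymm hAsq h0)
    rcases h01 with h0 | h0
    · have hA0 : A = 0 := by
        have := pow_eq_zero_iff (n := 2) (by norm_num) |>.mp h0
        exact this
      have hB0 : B = 0 := by
        rw [hA0] at h3'
        linarith
      rw [hB0] at hBsq
      norm_num at hBsq
    · have hsq : (2 * B) ^ 2 = (p * A) ^ 2 := by
        have : (2 : ℤ) * B = -(p * A) := by linarith
        rw [this]; ring
      have : 4 * B ^ 2 = p ^ 2 * A ^ 2 := by nlinarith [hsq]
      rw [hBsq, h0] at this
      nlinarith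
  calc k = Fintype.card (Fin k) := (Fintype.card_fin k).symm
    _ ≤ Fintype.card (Fin m) := Fintype.card_le_of_injective τ hinj
    _ = m := Fintype.card_fin m
end

section
/- Let p, q, r be integers with p < 0 and p ≡ 0 or 3 (mod 4). Then there exists an integer x with x ≡ 1 (mod 4) such that f := p·x² + 2(2q+1)·x + 4r satisfies f ≤ −1 and (−f − 1) ≡ 1 or 2 (mod 4). -/
theorem stmt_15 (p q r : ℤ) (hp : p < 0) (hmod : p % 4 = 0 ∨ p % 4 = 3) :
    ∃ x : ℤ, x % 4 = 1 ∧
      p * x ^ 2 + 2 * (2 * q + 1) * x + 4 * r ≤ -1 ∧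
      ((-(p * x ^ 2 + 2 * (2 * q + 1) * x + 4 * r) - 1) % 4 = 1 ∨
        (-(p * x ^ 2 + 2 * (2 * q + 1) * x + 4 * r) - 1) % 4 = 2) := by
  set m : ℤ := |q| + |r| with hm
  have hq : q ≤ |q| := le_abs_self q
  have hq' : -q ≤ |q| := neg_le_abs q
  have hr : r ≤ |r| := le_abs_self r
  have hr' : -r ≤ |r| := neg_le_abs r
  have hm0 : 0 ≤ m := by positivity
  refine ⟨4 * m + 5, by omega, ?_, ?_⟩
  · have hp1 : p ≤ -1 := by omega
    nlinarith [sq_nonneg (4 * m + 5), sq_nonneg m, mul_le_mul_of_nonneg_right hp1 (sq_nonneg (4 * m + 5))]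
  · have hT : p * (4 * m + 5) ^ 2 + 2 * (2 * q + 1) * (4 * m + 5) + 4 * r
        = p + 4 * q + 2 + 4 * (p * (4 * m ^ 2 + 10 * m + 6) + q * (4 * m + 4) + 2 * m + 2 + r) := by
      ring
    omega
end

section
/- Let n ≥ 1, let a₁, …, aₙ be integers with aᵢ ≥ 3 for all i, and let m ≥ 0. Suppose for each i ∈ {1,…,n} we have integers cᵢ, bᵢ¹,…,bᵢⁿ (with bᵢⁱ excluded, i.e. bᵢʲ for j ≠ i) and dᵢ¹,…,dᵢᵐ satisfying Σ_{j≠i} 2(bᵢʲ)²·aⱼ + cᵢ²·(2aᵢ − 1) + (cᵢ + 1)² + 2·Σ_ℓ (dᵢ^ℓ)² = 3, and for all i ≠ i', Σ_ℓ dᵢ^ℓ d_{i'}^ℓ = 0 whenever cᵢ = c_{i'} = 0 and all bᵢʲ = 0. Then: for each i, cᵢ = 0, all bᵢʲ = 0, and Σ_ℓ (dᵢ^ℓ)² = 1; consequently the n vectors (dᵢ¹,…,dᵢᵐ) are orthonormal in ℤ^m and n ≤ m. -/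
theorem stmt_19 (n m : ℕ) (hn : 1 ≤ n) (a : Fin n → ℤ) (ha : ∀ i, 3 ≤ a i)
    (c : Fin n → ℤ) (b : Fin n → Fin n → ℤ) (d : Fin n → Fin m → ℤ)
    (heq : ∀ i, (∑ j ∈ Finset.univ.erase i, 2 * (b i j) ^ 2 * a j) +
        (c i) ^ 2 * (2 * a i - 1) + (c i + 1) ^ 2 + 2 * ∑ l, (d i l) ^ 2 = 3)
    (horth : ∀ i i', i ≠ i' → c i = 0 → c i' = 0 →
        (∀ j, j ≠ i → b i j = 0) → (∀ j, j ≠ i' → b i' j = 0) →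
        ∑ l, d i l * d i' l = 0) :
    (∀ i, c i = 0 ∧ (∀ j, j ≠ i → b i j = 0) ∧ ∑ l, (d i l) ^ 2 = 1) ∧
    (∀ i i', ∑ l, d i l * d i' l = if i = i' then 1 else 0) ∧
    n ≤ m := by
  have key : ∀ i, c i = 0 ∧ (∀ j, j ≠ i → b i j = 0) ∧ ∑ l, (d i l) ^ 2 = 1 := by
    intro i
    have hA : 0 ≤ ∑ j ∈ Finset.univ.erase i, 2 * (b i j) ^ 2 * a j := by
      apply Finset.sum_nonneg
      intro j _
      have := ha j
      positivity
    have hD : 0 ≤ ∑ l, (d i l) ^ 2 := Finset.sum_nonneg fun l _ => sq_nonneg _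
    have hi := heq i
    have hc : c i = 0 := by
      by_contra hcne
      have h1 : 1 ≤ (c i) ^ 2 := by
        rcases lt_or_gt_of_ne hcne with h | h <;> nlinarith
      nlinarith [ha i, sq_nonneg (c i + 1)]
    have hrest : (∑ j ∈ Finset.univ.erase i, 2 * (b i j) ^ 2 * a j)
        + 2 * ∑ l, (d i l) ^ 2 = 2 := by
      rw [hc] at hi; linarith
    have hb : ∀ j, j ≠ i → b i j = 0 := by
      intro j hj
      by_contra hbne
      have hmem : j ∈ Finset.univ.erase i := Finset.mem_erase.mpr ⟨hj, Finset.mem_univ j⟩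
      have hle : 2 * (b i j) ^ 2 * a j ≤
          ∑ j ∈ Finset.univ.erase i, 2 * (b i j) ^ 2 * a j := by
        apply Finset.single_le_sum (f := fun j => 2 * (b i j) ^ 2 * a j) _ hmem
        intro k _
        have := ha k
        positivity
      have h1 : 1 ≤ (b i j) ^ 2 := by
        rcases lt_or_gt_of_ne hbne with h | h <;> nlinarith
      nlinarith [ha j]
    have hA0 : (∑ j ∈ Finset.univ.erase i, 2 * (b i j) ^ 2 * a j) = 0 := by
      apply Finset.sum_eq_zero
      intro j hj
      rw [hb j (Finset.mem_erase.mp hj).1]; ring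
    refine ⟨hc, hb, ?_⟩
    rw [hA0] at hrest; linarith
  have hinner : ∀ i i', ∑ l, d i l * d i' l = if i = i' then 1 else 0 := by
    intro i i'
    by_cases h : i = i'
    · subst h
      simp only [if_pos rfl]
      rw [← (key i).2.2]
      exact Finset.sum_congr rfl fun l _ => (sq (d i l)).symm
    · rw [if_neg h]
      exact horth i i' h (key i).1 (key i').1 (key i).2.1 (key i').2.1
  refine ⟨key, hinner, ?_⟩
  set v : Fin n → (Fin m → ℚ) := fun i l => (d i l : ℚ) with hv
  have hinnerQ : ∀ i i', ∑ l, v i l * v i' l = if i = i' then 1 else 0 := by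
    intro i i'
    have h := congrArg ((Int.cast : ℤ → ℚ)) (hinner i i')
    push_cast [apply_ite (Int.cast : ℤ → ℚ)] at h
    simpa [hv] using h
  have hli : LinearIndependent ℚ v := by
    rw [Fintype.linearIndependent_iff]
    intro g hg i
    have h0 : ∑ l, (∑ j, g j • v j) l * v i l = 0 := by
      rw [hg]; simp
    have h1 : ∑ l, (∑ j, g j • v j) l * v i l = ∑ j, g j * ∑ l, v j l * v i l := by
      simp only [Finset.sum_apply, Pi.smul_apply, smul_eq_mul, Finset.sum_mul]
      rw [Finset.sum_comm]
      simp [Finset.mul_sum, mul_assoc]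
    have h2 : ∑ j, g j * ∑ l, v j l * v i l = g i := by
      rw [Finset.sum_eq_single i]
      · rw [hinnerQ i i, if_pos rfl, mul_one]
      · intro j _ hj
        rw [hinnerQ j i, if_neg hj, mul_zero]
      · intro h; exact absurd (Finset.mem_univ i) h
    rw [h0, h2] at h1
    exact h1.symm
  have := hli.fintype_card_le_finrank
  simpa [Module.finrank_fin_fun] using this
end
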